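/- If R(u) ∈ End(A)[[u]] satisfies the symplectic condition R(u) R†(−u) = id, where R† is the adjoint with respect to a non-degenerate symmetric bilinear form b, then the formal expression B(u₁, u₂) = (b† − R(u₁) ⊗ R(u₂) · b†)/(u₁ + u₂) is a well-defined element of (A ⊗ A)[[u₁, u₂]], i.e. the numerator is divisible by u₁ + u₂ in A ⊗ A[[u₁, u₂]]. -/

import Mathlib

open TensorProduct Finset

section Aux

variable {A : Type*} [AddCommGroup A] [Module ℂ A] [FiniteDimensional ℂ A]

/-- contraction in the first slot by `b y`. -/
noncomputable def Gmap (b : A →ₗ[ℂ] A →ₗ[ℂ] ℂ) (y : A) :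
    TensorProduct ℂ A A →ₗ[ℂ] A :=
  TensorProduct.lift ((LinearMap.lsmul ℂ A) ∘ₗ (b y))

lemma Gmap_tmul (b : A →ₗ[ℂ] A →ₗ[ℂ] ℂ) (y a c : A) :
    Gmap b y (a ⊗ₜ c) = b y a • c := rfl

lemma eq_zero_of_Gmap (b : A →ₗ[ℂ] A →ₗ[ℂ] ℂ) (hsymm : ∀ x y, b x y = b y x)
    (hnd : ∀ x, (∀ y, b x y = 0) → x = 0) (t : TensorProduct ℂ A A)
    (h : ∀ y, Gmap b y t = 0) : t = 0 := by
  let e := LinearMap.BilinForm.toDual b ⟨fun x hx => hnd x hx, fun y hy => hnd y fun x => by rw [hsymm]; exact hy x⟩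
  let ψ := (TensorProduct.congr e (LinearEquiv.refl ℂ A)).trans (dualTensorHomEquiv ℂ A A)
  have hψ : ∀ (s : TensorProduct ℂ A A) (y : A), ψ s y = Gmap b y s := by
    intro s y
    induction s using TensorProduct.induction_on with
    | zero => simp [Gmap]
    | tmul a c =>
        simp only [ψ, e, LinearEquiv.trans_apply, congr_tmul, LinearEquiv.refl_apply,
          dualTensorHomEquiv, dualTensorHomEquivOfBasis_apply, LinearEquiv.ofBijective_apply,
          dualTensorHom_apply, Gmap_tmul]
        change b a y • c = b y a • c
        rw [hsymm]
    | add s₁ s₂ h1 h2 =>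
        rw [map_add, LinearMap.add_apply, h1, h2, ← map_add]
  have hz : ψ t = 0 := by
    apply LinearMap.ext
    intro y
    rw [hψ, h y, LinearMap.zero_apply]
  have := congrArg ψ.symm hz
  simpa using this

lemma Gmap_map (b : A →ₗ[ℂ] A →ₗ[ℂ] ℂ) (hsymm : ∀ x y, b x y = b y x)
    (f fadj g : Module.End ℂ A) (hadj : ∀ x y, b (f x) y = b x (fadj y))
    (y : A) (t : TensorProduct ℂ A A) :
    Gmap b y (TensorProduct.map f g t) = g (Gmap b (fadj y) t) := by
  induction t using TensorProduct.induction_on with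
  | zero => simp
  | tmul a c =>
      rw [map_tmul, Gmap_tmul, Gmap_tmul, map_smul]
      congr 1
      rw [hsymm, hadj, hsymm]
  | add s₁ s₂ h1 h2 => simp only [map_add, h1, h2]

end Aux

/-- If `R(u)` satisfies the symplectic condition `R(u)R†(-u) = id`, then the numerator
`b† - R(u₁)⊗R(u₂)·b†` of `B(u₁,u₂)` is divisible by `u₁ + u₂` in `(A⊗A)[[u₁,u₂]]`:
coefficientwise, there is a double sequence `B` of elements of `A⊗A` such that the
`(d₁,d₂)`-coefficient of the numerator equals `B (d₁-1) d₂ + B d₁ (d₂-1)`. -/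
theorem B_series_well_defined
    {A : Type*} [AddCommGroup A] [Module ℂ A] [FiniteDimensional ℂ A]
    (b : A →ₗ[ℂ] A →ₗ[ℂ] ℂ)
    (hsymm : ∀ x y, b x y = b y x)
    (hnd : ∀ x, (∀ y, b x y = 0) → x = 0)
    (R Radj : ℕ → Module.End ℂ A)
    (hR0 : R 0 = 1)
    (hadj : ∀ n x y, b (R n x) y = b x (Radj n y))
    (hsympl : ∀ n, 1 ≤ n →
      ∑ i ∈ Finset.range (n + 1), ((-1 : ℂ) ^ (n - i)) • (R i ∘ₗ Radj (n - i)) = 0)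
    (bdual : TensorProduct ℂ A A)
    (hbd : ∀ x : A,
      TensorProduct.lift ((LinearMap.lsmul ℂ A) ∘ₗ (b x)) bdual = x) :
    ∃ B : ℕ → ℕ → TensorProduct ℂ A A,
      ∀ d₁ d₂ : ℕ,
        (if d₁ = 0 ∧ d₂ = 0 then bdual else 0)
            - TensorProduct.map (R d₁) (R d₂) bdual
          = (if d₁ = 0 then 0 else B (d₁ - 1) d₂)
            + (if d₂ = 0 then 0 else B d₁ (d₂ - 1)) := by
  classical
  -- the numerator coefficients
  set N : ℕ → ℕ → TensorProduct ℂ A A := fun d₁ d₂ =>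
    (if d₁ = 0 ∧ d₂ = 0 then bdual else 0) - TensorProduct.map (R d₁) (R d₂) bdual with hN
  have hNne : ∀ d₁ d₂, ¬(d₁ = 0 ∧ d₂ = 0) →
      N d₁ d₂ = -(TensorProduct.map (R d₁) (R d₂) bdual) := by
    intro d₁ d₂ h
    simp [hN, h]
  -- key vanishing: alternating sum of the map coefficients kills bdual
  have hzero : ∀ m : ℕ, 1 ≤ m →
      ∑ i ∈ Finset.range (m + 1),
        ((-1 : ℂ) ^ i) • TensorProduct.map (R i) (R (m - i)) bdual = 0 := by
    intro m hm
    apply eq_zero_of_Gmap b hsymm hnd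
    intro y
    rw [map_sum]
    have hterm : ∀ i,
        Gmap b y (((-1 : ℂ) ^ i) • TensorProduct.map (R i) (R (m - i)) bdual)
          = (((-1 : ℂ) ^ i) • (R (m - i) ∘ₗ Radj i)) y := by
      intro i
      rw [map_smul, Gmap_map b hsymm (R i) (Radj i) (R (m - i)) (hadj i) y bdual]
      have : Gmap b (Radj i y) bdual = Radj i y := hbd (Radj i y)
      rw [this, LinearMap.smul_apply, LinearMap.comp_apply]
    calc ∑ i ∈ Finset.range (m + 1),
          Gmap b y (((-1 : ℂ) ^ i) • TensorProduct.map (R i) (R (m - i)) bdual)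
        = (∑ i ∈ Finset.range (m + 1), ((-1 : ℂ) ^ i) • (R (m - i) ∘ₗ Radj i)) y := by
          rw [LinearMap.sum_apply]
          exact Finset.sum_congr rfl fun i _ => hterm i
      _ = 0 := by
          have h1 := hsympl m hm
          have h2 : ∑ j ∈ Finset.range (m + 1),
              ((-1 : ℂ) ^ (m - (m - j))) • (R (m - j) ∘ₗ Radj (m - (m - j))) = 0 := by
            have hr := Finset.sum_range_reflect
              (fun i => ((-1 : ℂ) ^ (m - i)) • (R i ∘ₗ Radj (m - i))) (m + 1)
            simp only [Nat.add_sub_cancel] at hr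
            rw [hr]; exact h1
          have h3 : ∑ j ∈ Finset.range (m + 1),
              ((-1 : ℂ) ^ j) • (R (m - j) ∘ₗ Radj j) = 0 := by
            rw [← h2]
            apply Finset.sum_congr rfl
            intro j hj
            have hjm : j ≤ m := Nat.lt_succ_iff.mp (Finset.mem_range.mp hj)
            rw [Nat.sub_sub_self hjm]
          rw [h3, LinearMap.zero_apply]
  -- define B by recursion
  let Bfun : ℕ → ℕ → TensorProduct ℂ A A :=
    Nat.rec (fun m => N (m + 1) 0) (fun n ih m => N (m + 1) (n + 1) - ih (m + 1))
  have hBfun0 : ∀ m, Bfun 0 m = N (m + 1) 0 := fun _ => rfl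
  have hBfunS : ∀ n m, Bfun (n + 1) m = N (m + 1) (n + 1) - Bfun n (m + 1) := fun _ _ => rfl
  -- closed form
  have hBsum : ∀ n m, Bfun n m =
      ∑ k ∈ Finset.range (n + 1), ((-1 : ℂ) ^ k) • N (m + 1 + k) (n - k) := by
    intro n
    induction n with
    | zero => intro m; simp [hBfun0]
    | succ n ih =>
        intro m
        rw [hBfunS, ih (m + 1)]
        conv_rhs => rw [Finset.sum_range_succ']
        have : ∀ k, ((-1 : ℂ) ^ (k + 1)) • N (m + 1 + (k + 1)) (n + 1 - (k + 1))
            = -(((-1 : ℂ) ^ k) • N (m + 1 + 1 + k) (n - k)) := by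
          intro k
          rw [pow_succ, mul_comm, Nat.succ_sub_succ]
          have harg : m + 1 + (k + 1) = m + 1 + 1 + k := by ring
          rw [harg, mul_smul, neg_one_smul]
        rw [Finset.sum_congr rfl (fun k _ => this k), Finset.sum_neg_distrib]
        simp
        abel
  refine ⟨fun m n => Bfun n m, ?_⟩
  intro d₁ d₂
  show N d₁ d₂ = _
  match d₁, d₂ with
  | (d + 1), 0 =>
      simp only [Nat.succ_ne_zero, if_neg, if_pos rfl, Nat.add_sub_cancel]
      rw [hBfun0]
      simp
  | (d + 1), (e + 1) =>
      simp only [Nat.succ_ne_zero, if_neg, Nat.add_sub_cancel]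
      rw [hBfunS]
      simp

  | 0, 0 =>
      simp only [if_pos rfl]
      rw [hN]
      simp [hR0]
  | 0, (e + 1) =>
      simp only [Nat.succ_ne_zero, if_neg, if_pos rfl, Nat.add_sub_cancel, zero_add]
      rw [hBsum]
      -- N 0 (e+1) = ∑_{k<e+1} (-1)^k • N (1+k) (e-k)
      have hall : ∀ k, k ∈ Finset.range (e + 1) →
          ((-1 : ℂ) ^ k) • N (0 + 1 + k) (e - k)
            = -(((-1 : ℂ) ^ k) • TensorProduct.map (R (k + 1)) (R (e - k)) bdual) := by
        intro k _
        rw [hNne (0 + 1 + k) (e - k) (by simp), show 0 + 1 + k = k + 1 by ring, smul_neg]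
      rw [Finset.sum_congr rfl hall, Finset.sum_neg_distrib]
      rw [hNne 0 (e + 1) (by simp)]
      have hz := hzero (e + 1) (Nat.le_add_left 1 e)
      rw [Finset.sum_range_succ'] at hz
      have hze : ∀ i, ((-1 : ℂ) ^ (i + 1)) • TensorProduct.map (R (i + 1)) (R (e + 1 - (i + 1))) bdual
          = -(((-1 : ℂ) ^ i) • TensorProduct.map (R (i + 1)) (R (e - i)) bdual) := by
        intro i
        rw [Nat.succ_sub_succ, pow_succ, mul_comm, mul_smul, neg_one_smul]
      rw [Finset.sum_congr rfl (fun i _ => hze i), Finset.sum_neg_distrib] at hz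
      simp only [pow_zero, one_smul, Nat.sub_zero] at hz
      have hR00 : TensorProduct.map (R 0) (R (e + 1)) bdual
          = ∑ i ∈ Finset.range (e + 1),
              ((-1 : ℂ) ^ i) • TensorProduct.map (R (i + 1)) (R (e - i)) bdual := by
        have := hz
        linear_combination (norm := abel) this
      rw [hR00]
      simp
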